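/- Let w, t > 0 satisfy 2β w^α ≤ t, with 1 ≤ α ≤ 2 and β > 0. Let f : [0,1] → ℝ be differentiable with |f'(x) - f'(y)| ≤ αβ|x-y|^{α-1}. Fix an interval I = [a, a+w] ⊆ [0,1] with midpoint x₀ = a + w/2. Let δ₁ = t/4, δ₂ = t/(4w), and let ℓ₁δ₁ be a multiple of δ₁ with |f(x₀) - ℓ₁δ₁| ≤ δ₁/2, and ℓ₂δ₂ a multiple of δ₂ with |f'(x₀) - ℓ₂δ₂| ≤ δ₂/2. Define the line g(x) = ℓ₁δ₁ + ℓ₂δ₂(x - x₀). Then for all x ∈ I, |f(x) - g(x)| ≤ t/2. -/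

import Mathlib

open Set Filter Topology

lemma helper_bound (α β r : ℝ) (hα : 1 ≤ α)
    (F F' : ℝ → ℝ)
    (hF : ∀ s ∈ Icc 0 r, HasDerivWithinAt F (F' s) (Icc 0 r) s)
    (hF0 : F 0 = 0)
    (hF' : ∀ s ∈ Icc 0 r, |F' s| ≤ α * β * s ^ (α - 1)) :
    ∀ s ∈ Icc 0 r, |F s| ≤ β * s ^ α := by
  have hcont : ContinuousOn F (Icc 0 r) := fun y hy => (hF y hy).continuousWithinAt
  have hF'2 : ∀ y ∈ Ico 0 r, HasDerivWithinAt F (F' y) (Ici y) y := by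
    intro y hy
    refine (hF y (Ico_subset_Icc_self hy)).mono_of_mem_nhdsWithin ?_
    have h1 : Icc y r ∈ 𝓝[Ici y] y := by
      rw [← Ici_inter_Iic]
      exact inter_mem_nhdsWithin _ (Iic_mem_nhds hy.2)
    exact Filter.mem_of_superset h1 (Icc_subset_Icc hy.1 le_rfl)
  have hB : ∀ y : ℝ, HasDerivAt (fun s => β * s ^ α) (β * (α * y ^ (α - 1))) y :=
    fun y => (Real.hasDerivAt_rpow_const (Or.inr hα)).const_mul β
  have bound : ∀ y ∈ Ico (0:ℝ) r, ‖F' y‖ ≤ β * (α * y ^ (α - 1)) := by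
    intro y hy
    rw [Real.norm_eq_abs]
    calc |F' y| ≤ α * β * y ^ (α - 1) := hF' y (Ico_subset_Icc_self hy)
    _ = β * (α * y ^ (α - 1)) := by ring
  have h0 : ‖F 0‖ ≤ β * (0:ℝ) ^ α := by
    rw [hF0, norm_zero, Real.zero_rpow (by linarith), mul_zero]
  intro s hs
  have := image_norm_le_of_norm_deriv_right_le_deriv_boundary hcont hF'2 h0 hB bound hs
  simpa [Real.norm_eq_abs] using this

/-- Lemma 2.2: the strip of thickness t around the quantized tangent line g
covers the graph of f over an interval of width w. -/
theorem strip_covers_graph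
    (α β w t : ℝ) (hα : 1 ≤ α) (hα2 : α ≤ 2) (hβ : 0 < β)
    (hw : 0 < w) (ht : 0 < t) (hwt : 2 * β * w ^ α ≤ t)
    (f f' : ℝ → ℝ)
    (hderiv : ∀ x ∈ Icc (0:ℝ) 1, HasDerivWithinAt f (f' x) (Icc (0:ℝ) 1) x)
    (hhold : ∀ x ∈ Icc (0:ℝ) 1, ∀ y ∈ Icc (0:ℝ) 1,
      |f' x - f' y| ≤ α * β * |x - y| ^ (α - 1))
    (a : ℝ) (hI : Icc a (a + w) ⊆ Icc (0:ℝ) 1)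
    (x₀ : ℝ) (hx₀ : x₀ = a + w / 2)
    (δ₁ δ₂ : ℝ) (hδ₁ : δ₁ = t / 4) (hδ₂ : δ₂ = t / (4 * w))
    (ℓ₁ ℓ₂ : ℤ)
    (hℓ₁ : |f x₀ - ℓ₁ * δ₁| ≤ δ₁ / 2) (hℓ₂ : |f' x₀ - ℓ₂ * δ₂| ≤ δ₂ / 2)
    (g : ℝ → ℝ) (hg : ∀ x, g x = ℓ₁ * δ₁ + ℓ₂ * δ₂ * (x - x₀)) :
    ∀ x ∈ Icc a (a + w), |f x - g x| ≤ t / 2 := by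
  have hx₀I : x₀ ∈ Icc a (a + w) := by
    constructor <;> [skip; skip] <;> rw [hx₀] <;> linarith
  have hx₀01 : x₀ ∈ Icc (0:ℝ) 1 := hI hx₀I
  intro x hx
  -- Taylor bound
  have taylor : |f x - f x₀ - f' x₀ * (x - x₀)| ≤ β * |x - x₀| ^ α := by
    rcases le_total x₀ x with hc | hc
    · -- right case
      set r := x - x₀ with hr
      have hr0 : 0 ≤ r := by simp [hr]; linarith
      have hmaps : ∀ s ∈ Icc (0:ℝ) r, x₀ + s ∈ Icc (0:ℝ) 1 := by
        intro s hs
        apply hI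
        constructor
        · have := hx₀I.1; linarith [hs.1]
        · have := hx.2; simp only [hr] at hs; linarith [hs.2]
      have key := helper_bound α β r hα
        (fun s => f (x₀ + s) - f x₀ - f' x₀ * s)
        (fun s => f' (x₀ + s) - f' x₀)
        (by
          intro s hs
          have hinner : HasDerivWithinAt (fun s : ℝ => x₀ + s) 1 (Icc 0 r) s :=
            ((hasDerivAt_id s).const_add x₀).hasDerivWithinAt
          have h1 : HasDerivWithinAt (fun s : ℝ => f (x₀ + s)) (f' (x₀ + s) * 1) (Icc 0 r) s :=
            HasDerivWithinAt.comp s (hderiv _ (hmaps s hs)) hinner hmaps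
          have h2 : HasDerivWithinAt (fun s : ℝ => f' x₀ * s) (f' x₀) (Icc 0 r) s := by
            simpa using ((hasDerivAt_id s).const_mul (f' x₀)).hasDerivWithinAt
          exact ((h1.sub_const (f x₀)).sub h2).congr_deriv (by ring))
        (by simp)
        (by
          intro s hs
          have := hhold (x₀ + s) (hmaps s hs) x₀ hx₀01
          simpa [abs_of_nonneg hs.1] using this)
        r (by constructor <;> [exact hr0; exact le_rfl])
      have habs : |x - x₀| = r := abs_of_nonneg (by linarith)
      rw [habs]
      convert key using 2 <;> simp [hr]
    · -- left case
      set r := x₀ - x with hr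
      have hr0 : 0 ≤ r := by simp [hr]; linarith
      have hmaps : ∀ s ∈ Icc (0:ℝ) r, x₀ - s ∈ Icc (0:ℝ) 1 := by
        intro s hs
        apply hI
        constructor
        · have := hx.1; simp only [hr] at hs; linarith [hs.2]
        · have := hx₀I.2; linarith [hs.1]
      have key := helper_bound α β r hα
        (fun s => f (x₀ - s) - f x₀ + f' x₀ * s)
        (fun s => -(f' (x₀ - s)) + f' x₀)
        (by
          intro s hs
          have hinner : HasDerivWithinAt (fun s : ℝ => x₀ - s) (-1) (Icc 0 r) s := by
            simpa using ((hasDerivAt_id s).const_sub x₀).hasDerivWithinAt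
          have h1 : HasDerivWithinAt (fun s : ℝ => f (x₀ - s)) (f' (x₀ - s) * (-1)) (Icc 0 r) s :=
            HasDerivWithinAt.comp s (hderiv _ (hmaps s hs)) hinner hmaps
          have h2 : HasDerivWithinAt (fun s : ℝ => f' x₀ * s) (f' x₀) (Icc 0 r) s := by
            simpa using ((hasDerivAt_id s).const_mul (f' x₀)).hasDerivWithinAt
          have := (h1.sub_const (f x₀)).add h2
          exact this.congr_deriv (by ring))
        (by simp)
        (by
          intro s hs
          have := hhold (x₀ - s) (hmaps s hs) x₀ hx₀01
          have e : |x₀ - s - x₀| = s := by rw [abs_sub_comm]; simpa using abs_of_nonneg hs.1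
          rw [e] at this
          calc |-(f' (x₀ - s)) + f' x₀| = |f' (x₀ - s) - f' x₀| := by rw [abs_sub_comm]; ring_nf
          _ ≤ α * β * s ^ (α - 1) := this)
        r (by constructor <;> [exact hr0; exact le_rfl])
      have habs : |x - x₀| = r := by rw [abs_sub_comm]; exact abs_of_nonneg (by linarith)
      rw [habs]
      have e2 : |f x - f x₀ - f' x₀ * (x - x₀)| = |f (x₀ - r) - f x₀ + f' x₀ * r| := by
        have : x₀ - r = x := by simp [hr]
        rw [this, hr]; ring_nf
      rw [e2]
      exact key
  -- arithmetic
  have hxd : |x - x₀| ≤ w / 2 := by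
    rw [abs_le]; constructor <;> [skip; skip] <;> rw [hx₀] <;> [linarith [hx.1]; linarith [hx.2]]
  have hα0 : 0 ≤ α := by linarith
  have h1 : β * |x - x₀| ^ α ≤ β * (w / 2) ^ α :=
    mul_le_mul_of_nonneg_left (Real.rpow_le_rpow (abs_nonneg _) hxd hα0) hβ.le
  have h2pow : (2:ℝ) ≤ (2:ℝ) ^ α := by
    calc (2:ℝ) = 2 ^ (1:ℝ) := (Real.rpow_one 2).symm
    _ ≤ 2 ^ α := Real.rpow_le_rpow_of_exponent_le (by norm_num) hα
  have h2 : β * (w / 2) ^ α ≤ t / 4 := by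
    rw [Real.div_rpow hw.le (by norm_num)]
    have hw2 : (0:ℝ) < w ^ α := Real.rpow_pos_of_pos hw α
    have h2a : (0:ℝ) < 2 ^ α := Real.rpow_pos_of_pos (by norm_num) α
    have : β * (w ^ α / 2 ^ α) ≤ β * (w ^ α / 2) := by
      apply mul_le_mul_of_nonneg_left _ hβ.le
      apply div_le_div_of_nonneg_left hw2.le (by norm_num) h2pow
    calc β * (w ^ α / 2 ^ α) ≤ β * (w ^ α / 2) := this
    _ = (2 * β * w ^ α) / 4 := by ring
    _ ≤ t / 4 := by linarith
  have h3 : |(f' x₀ - ℓ₂ * δ₂) * (x - x₀)| ≤ t / 16 := by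
    rw [abs_mul]
    have hδ₂pos : 0 < δ₂ := by rw [hδ₂]; positivity
    calc |f' x₀ - ℓ₂ * δ₂| * |x - x₀| ≤ (δ₂ / 2) * (w / 2) :=
      mul_le_mul hℓ₂ hxd (abs_nonneg _) (by positivity)
    _ = t / 16 := by rw [hδ₂]; field_simp; ring
  have hdecomp : f x - g x = (f x - f x₀ - f' x₀ * (x - x₀)) + (f x₀ - ℓ₁ * δ₁)
      + (f' x₀ - ℓ₂ * δ₂) * (x - x₀) := by
    rw [hg x]; ring
  rw [hdecomp]
  calc |(f x - f x₀ - f' x₀ * (x - x₀)) + (f x₀ - ℓ₁ * δ₁) + (f' x₀ - ℓ₂ * δ₂) * (x - x₀)|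
      ≤ |f x - f x₀ - f' x₀ * (x - x₀)| + |f x₀ - ℓ₁ * δ₁| + |(f' x₀ - ℓ₂ * δ₂) * (x - x₀)| := by
        exact abs_add_three _ _ _
  _ ≤ t / 4 + δ₁ / 2 + t / 16 := add_le_add (add_le_add (le_trans taylor (h1.trans h2)) hℓ₁) h3
  _ ≤ t / 2 := by rw [hδ₁]; linarith
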